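/- arXiv:2301.10816 — 2 statements merged into one kernel-verified Lean document; each statement's English description precedes it below -/
import Mathlib

section
/- Let S⁰ ∈ ℝ^{n×m}, ε ≥ 0, and B_ε(S⁰) the Frobenius ball of radius ε around S⁰. Let 𝒜 be any set of 0-1 assignment matrices in which every matrix has exactly K ones. Then A maximizes inf_{S ∈ B_ε(S⁰)} USW(A, S) over 𝒜 if and only if A maximizes USW(A, S⁰) over 𝒜. -/
/-- Utilitarian social welfare: `USW(A,S) = (1/n) Σ_{p,r} A_{p,r} S_{p,r}`. -/
noncomputable def USW (n m : ℕ) (A S : Matrix (Fin n) (Fin m) ℝ) : ℝ :=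
  (1 / (n : ℝ)) * ∑ p, ∑ r, A p r * S p r

/-- Frobenius norm of a matrix. -/
noncomputable def frobNorm (n m : ℕ) (X : Matrix (Fin n) (Fin m) ℝ) : ℝ :=
  Real.sqrt (∑ p, ∑ r, (X p r) ^ 2)

lemma sInf_ball_eq (n m K : ℕ) (S0 : Matrix (Fin n) (Fin m) ℝ) (ε : ℝ) (hε : 0 ≤ ε)
    (B : Matrix (Fin n) (Fin m) ℝ)
    (hB01 : ∀ p r, B p r = 0 ∨ B p r = 1)
    (hBK : ∑ p, ∑ r, B p r = (K : ℝ)) :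
    sInf ((fun S => USW n m B S) '' {X | frobNorm n m (X - S0) ≤ ε})
      = USW n m B S0 - (1 / (n : ℝ)) * (ε * Real.sqrt K) := by
  have hsq : ∑ p, ∑ r, (B p r) ^ 2 = (K : ℝ) := by
    rw [← hBK]
    refine Finset.sum_congr rfl fun p _ => Finset.sum_congr rfl fun r _ => ?_
    rcases hB01 p r with h | h <;> simp [h]
  have hn : (0:ℝ) ≤ 1 / (n : ℝ) := by positivity
  -- lower bound
  have lb : ∀ X : Matrix (Fin n) (Fin m) ℝ, frobNorm n m (X - S0) ≤ ε →
      USW n m B S0 - (1 / (n : ℝ)) * (ε * Real.sqrt K) ≤ USW n m B X := by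
    intro X hX
    have hCS : (∑ p, ∑ r, B p r * (X - S0) p r) ^ 2 ≤
        (K : ℝ) * ∑ p, ∑ r, ((X - S0) p r) ^ 2 := by
      have h0 := Finset.sum_mul_sq_le_sq_mul_sq Finset.univ
        (fun x : Fin n × Fin m => B x.1 x.2) (fun x : Fin n × Fin m => (X - S0) x.1 x.2)
      have e1 : ∑ x : Fin n × Fin m, B x.1 x.2 * (X - S0) x.1 x.2
          = ∑ p, ∑ r, B p r * (X - S0) p r := Fintype.sum_prod_type _
      have e2 : ∑ x : Fin n × Fin m, B x.1 x.2 ^ 2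
          = ∑ p, ∑ r, B p r ^ 2 := Fintype.sum_prod_type _
      have e3 : ∑ x : Fin n × Fin m, (X - S0) x.1 x.2 ^ 2
          = ∑ p, ∑ r, (X - S0) p r ^ 2 := Fintype.sum_prod_type _
      rw [e1, e2, e3, hsq] at h0
      exact h0
    have habs : |∑ p, ∑ r, B p r * (X - S0) p r| ≤ ε * Real.sqrt K := by
      have h1 : |∑ p, ∑ r, B p r * (X - S0) p r|
          = Real.sqrt ((∑ p, ∑ r, B p r * (X - S0) p r) ^ 2) :=
        (Real.sqrt_sq_eq_abs _).symm
      rw [h1]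
      calc Real.sqrt ((∑ p, ∑ r, B p r * (X - S0) p r) ^ 2)
          ≤ Real.sqrt ((K : ℝ) * ∑ p, ∑ r, ((X - S0) p r) ^ 2) := Real.sqrt_le_sqrt hCS
        _ = Real.sqrt K * frobNorm n m (X - S0) := by
            rw [Real.sqrt_mul (by positivity)]; rfl
        _ ≤ Real.sqrt K * ε := by
            exact mul_le_mul_of_nonneg_left hX (Real.sqrt_nonneg _)
        _ = ε * Real.sqrt K := mul_comm _ _
    have hsplit : ∑ p, ∑ r, B p r * X p r
        = (∑ p, ∑ r, B p r * S0 p r) + ∑ p, ∑ r, B p r * (X - S0) p r := by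
      rw [← Finset.sum_add_distrib]
      refine Finset.sum_congr rfl fun p _ => ?_
      rw [← Finset.sum_add_distrib]
      refine Finset.sum_congr rfl fun r _ => ?_
      simp [Matrix.sub_apply]; ring
    have h2 : -(ε * Real.sqrt K) ≤ ∑ p, ∑ r, B p r * (X - S0) p r := neg_le_of_abs_le habs
    unfold USW
    rw [hsplit]
    nlinarith [mul_le_mul_of_nonneg_left h2 hn]
  -- the minimizer
  set c : ℝ := ε / Real.sqrt K with hc
  have hc0 : 0 ≤ c := by positivity
  set X0 : Matrix (Fin n) (Fin m) ℝ := S0 - c • B with hX0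
  have hX0mem : frobNorm n m (X0 - S0) ≤ ε := by
    have : ∀ p r, ((X0 - S0) p r) ^ 2 = c ^ 2 * (B p r) ^ 2 := by
      intro p r
      simp [hX0, Matrix.sub_apply, Matrix.smul_apply, smul_eq_mul]
      ring
    unfold frobNorm
    simp only [this, ← Finset.mul_sum]
    rw [hsq, Real.sqrt_mul (by positivity), Real.sqrt_sq hc0]
    rcases eq_or_ne (Real.sqrt K) 0 with h | h
    · simp [h]; positivity
    · rw [hc, div_mul_cancel₀ _ h]
  have hval : USW n m B X0 = USW n m B S0 - (1 / (n : ℝ)) * (ε * Real.sqrt K) := by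
    have hcK : c * (K : ℝ) = ε * Real.sqrt K := by
      rcases eq_or_ne (Real.sqrt K) 0 with h | h
      · have hK0 : (K : ℝ) = 0 :=
          le_antisymm (Real.sqrt_eq_zero'.mp h) (Nat.cast_nonneg K)
        simp [hK0, h]
      · rw [hc]; field_simp; rw [Real.sq_sqrt (Nat.cast_nonneg K)]
    have : ∑ p, ∑ r, B p r * X0 p r
        = (∑ p, ∑ r, B p r * S0 p r) - c * ∑ p, ∑ r, (B p r) ^ 2 := by
      rw [Finset.mul_sum, ← Finset.sum_sub_distrib]
      refine Finset.sum_congr rfl fun p _ => ?_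
      rw [Finset.mul_sum, ← Finset.sum_sub_distrib]
      refine Finset.sum_congr rfl fun r _ => ?_
      simp [hX0, Matrix.sub_apply, Matrix.smul_apply, smul_eq_mul]
      ring
    unfold USW
    rw [this, hsq, hcK]
    ring
  have hbdd : BddBelow ((fun S => USW n m B S) '' {X | frobNorm n m (X - S0) ≤ ε}) :=
    ⟨USW n m B S0 - 1 / (n : ℝ) * (ε * Real.sqrt K), by
      rintro y ⟨X, hX, rfl⟩; exact lb X hX⟩
  refine le_antisymm ?_ (le_csInf ⟨USW n m B X0, ⟨X0, hX0mem, rfl⟩⟩ ?_)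
  · rw [← hval]
    exact csInf_le hbdd ⟨X0, hX0mem, rfl⟩
  · rintro y ⟨X, hX, rfl⟩
    exact lb X hX

theorem stmt4 (n m K : ℕ) (S0 : Matrix (Fin n) (Fin m) ℝ) (ε : ℝ) (hε : 0 ≤ ε)
    (𝒜 : Set (Matrix (Fin n) (Fin m) ℝ))
    (h𝒜01 : ∀ A ∈ 𝒜, ∀ p r, A p r = 0 ∨ A p r = 1)
    (h𝒜K : ∀ A ∈ 𝒜, ∑ p, ∑ r, A p r = (K : ℝ))
    (A : Matrix (Fin n) (Fin m) ℝ) (hA : A ∈ 𝒜) :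
    ((∀ B ∈ 𝒜,
        sInf ((fun S => USW n m B S) '' {X | frobNorm n m (X - S0) ≤ ε}) ≤
          sInf ((fun S => USW n m A S) '' {X | frobNorm n m (X - S0) ≤ ε})) ↔
      (∀ B ∈ 𝒜, USW n m B S0 ≤ USW n m A S0)) := by
  have key : ∀ B ∈ 𝒜,
      sInf ((fun S => USW n m B S) '' {X | frobNorm n m (X - S0) ≤ ε})
        = USW n m B S0 - (1 / (n : ℝ)) * (ε * Real.sqrt K) := fun B hB =>
    sInf_ball_eq n m K S0 ε hε B (h𝒜01 B hB) (h𝒜K B hB)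
  constructor
  · intro h B hB
    have := h B hB
    rw [key B hB, key A hA] at this
    linarith
  · intro h B hB
    rw [key B hB, key A hA]
    have := h B hB
    linarith
end

section
/- Let 𝒮 ⊆ ℝ^{n×m} be nonempty with L1 diameter at most L, and suppose there exists S_γ ∈ 𝒮 with ‖S_γ − S*‖₁ ≤ γ, where S* is the true score matrix. Let 𝒜 be a finite nonempty set of 0-1 assignment matrices, A* = argmax_{A∈𝒜} USW(A, S*), and let A^ε ∈ 𝒜 satisfy max_{A∈𝒜} inf_{S∈𝒮} USW(A,S) − inf_{S∈𝒮} USW(A^ε, S) ≤ ε. Then USW(A*, S*) − USW(A^ε, S*) ≤ ε + (2γ + L)/n. -/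
/-- Entrywise L1 norm of a matrix. -/
noncomputable def l1Norm (n m : ℕ) (X : Matrix (Fin n) (Fin m) ℝ) : ℝ :=
  ∑ p, ∑ r, |X p r|

lemma l1Norm_sub_comm (n m : ℕ) (X Y : Matrix (Fin n) (Fin m) ℝ) :
    l1Norm n m (X - Y) = l1Norm n m (Y - X) := by
  simp [l1Norm, Matrix.sub_apply, abs_sub_comm]

lemma usw_lip (n m : ℕ) (A S S' : Matrix (Fin n) (Fin m) ℝ)
    (hA : ∀ p r, A p r = 0 ∨ A p r = 1) :
    USW n m A S - USW n m A S' ≤ l1Norm n m (S - S') / n := by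
  unfold USW l1Norm
  rw [← mul_sub, ← Finset.sum_sub_distrib]
  have h1 : ∀ p ∈ Finset.univ, (∑ r, A p r * S p r) - (∑ r, A p r * S' p r)
      ≤ ∑ r, |(S - S') p r| := by
    intro p _
    rw [← Finset.sum_sub_distrib]
    apply Finset.sum_le_sum
    intro r _
    rcases hA p r with h | h
    · simp [h, Matrix.sub_apply]
    · simp only [h, one_mul, Matrix.sub_apply]
      exact le_abs_self _
  have h2 := Finset.sum_le_sum h1
  calc (1 / (n : ℝ)) * ∑ p, ((∑ r, A p r * S p r) - ∑ r, A p r * S' p r)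
      ≤ (1 / (n : ℝ)) * ∑ p, ∑ r, |(S - S') p r| := by
        apply mul_le_mul_of_nonneg_left h2
        positivity
    _ = (∑ p, ∑ r, |(S - S') p r|) / n := by ring

theorem stmt11 (n m : ℕ) (𝒮 : Set (Matrix (Fin n) (Fin m) ℝ)) (h𝒮 : 𝒮.Nonempty)
    (L γ ε : ℝ)
    (hdiam : ∀ S ∈ 𝒮, ∀ S' ∈ 𝒮, l1Norm n m (S - S') ≤ L)
    (Sstar : Matrix (Fin n) (Fin m) ℝ)
    (hγ : ∃ Sγ ∈ 𝒮, l1Norm n m (Sγ - Sstar) ≤ γ)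
    (𝒜 : Set (Matrix (Fin n) (Fin m) ℝ)) (h𝒜ne : 𝒜.Nonempty) (h𝒜fin : 𝒜.Finite)
    (h𝒜01 : ∀ A ∈ 𝒜, ∀ p r, A p r = 0 ∨ A p r = 1)
    (Astar : Matrix (Fin n) (Fin m) ℝ) (hAstar : Astar ∈ 𝒜)
    (hopt : ∀ B ∈ 𝒜, USW n m B Sstar ≤ USW n m Astar Sstar)
    (Aeps : Matrix (Fin n) (Fin m) ℝ) (hAeps : Aeps ∈ 𝒜)
    (heps : sSup ((fun A => sInf ((fun S => USW n m A S) '' 𝒮)) '' 𝒜) -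
        sInf ((fun S => USW n m Aeps S) '' 𝒮) ≤ ε) :
    USW n m Astar Sstar - USW n m Aeps Sstar ≤ ε + (2 * γ + L) / n := by
  obtain ⟨Sγ, hSγmem, hSγ⟩ := hγ
  rcases Nat.eq_zero_or_pos n with hn | hn
  · subst hn
    have h0 : ∀ A S : Matrix (Fin 0) (Fin m) ℝ, USW 0 m A S = 0 := by
      intro A S; simp [USW]
    have him : ∀ A : Matrix (Fin 0) (Fin m) ℝ,
        (fun S => USW 0 m A S) '' 𝒮 = {(0 : ℝ)} := by
      intro A
      rw [show (fun S => USW 0 m A S) = (fun _ => (0:ℝ)) from funext (h0 A)]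
      exact h𝒮.image_const 0
    have houter : (fun A => sInf ((fun S => USW 0 m A S) '' 𝒮)) '' 𝒜 = {(0:ℝ)} := by
      rw [show (fun A => sInf ((fun S => USW 0 m A S) '' 𝒮)) = (fun _ => (0:ℝ)) from
        funext (fun A => by rw [him A, csInf_singleton])]
      exact h𝒜ne.image_const 0
    rw [houter, him Aeps] at heps
    simp only [csSup_singleton, csInf_singleton, sub_zero] at heps
    simp [h0, heps]
  have hnpos : (0:ℝ) < n := by exact_mod_cast hn
  set f : Matrix (Fin n) (Fin m) ℝ → ℝ :=
    fun A => sInf ((fun S => USW n m A S) '' 𝒮) with hf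
  -- lower bound for images
  have hbdd : ∀ A ∈ 𝒜, BddBelow ((fun S => USW n m A S) '' 𝒮) := by
    intro A hA
    refine ⟨USW n m A Sγ - L / n, ?_⟩
    rintro y ⟨S, hS, rfl⟩
    have h1 := usw_lip n m A Sγ S (h𝒜01 A hA)
    have h2 : l1Norm n m (Sγ - S) / n ≤ L / n :=
      div_le_div_of_nonneg_right (hdiam Sγ hSγmem S hS) hnpos.le
    linarith
  have step1 : USW n m Astar Sstar ≤ USW n m Astar Sγ + γ / n := by
    have h1 := usw_lip n m Astar Sstar Sγ (h𝒜01 Astar hAstar)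
    rw [l1Norm_sub_comm] at h1
    have h2 : l1Norm n m (Sγ - Sstar) / n ≤ γ / n :=
      div_le_div_of_nonneg_right hSγ hnpos.le
    linarith
  have step2 : USW n m Astar Sγ ≤ f Astar + L / n := by
    have : USW n m Astar Sγ - L / n ≤ f Astar := by
      apply le_csInf (h𝒮.image _)
      rintro y ⟨S, hS, rfl⟩
      have h1 := usw_lip n m Astar Sγ S (h𝒜01 Astar hAstar)
      have h2 : l1Norm n m (Sγ - S) / n ≤ L / n :=
        div_le_div_of_nonneg_right (hdiam Sγ hSγmem S hS) hnpos.le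
      linarith
    linarith
  have step3 : f Astar ≤ sSup (f '' 𝒜) :=
    le_csSup (h𝒜fin.image f).bddAbove (Set.mem_image_of_mem f hAstar)
  have step4 : f Aeps ≤ USW n m Aeps Sγ :=
    csInf_le (hbdd Aeps hAeps) (Set.mem_image_of_mem _ hSγmem)
  have step5 : USW n m Aeps Sγ ≤ USW n m Aeps Sstar + γ / n := by
    have h1 := usw_lip n m Aeps Sγ Sstar (h𝒜01 Aeps hAeps)
    have h2 : l1Norm n m (Sγ - Sstar) / n ≤ γ / n :=
      div_le_div_of_nonneg_right hSγ hnpos.le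
    linarith
  have heps' : sSup (f '' 𝒜) - f Aeps ≤ ε := heps
  have hsplit : (2 * γ + L) / (n:ℝ) = γ / n + L / n + γ / n := by
    field_simp; ring
  rw [hsplit]
  linarith
end
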